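/- Let L be a finite collection of lines through the origin in ℝ², all passing through the interior of the first quadrant (i.e., each with positive finite slope), and let P be a finite set of points in the open first quadrant such that each line in L contains at least n points of P. Then |P + P| ≥ (|L| - 1)·n². -/

import Mathlib

open scoped Pointwise

/-- Solymosi's lemma: if `L` is a finite set of lines through the origin with positive
slope (represented by their slopes) and `P` is a finite set of points in the open first
quadrant such that every line of `L` contains at least `n` points of `P`, then
`|P + P| ≥ (|L| - 1) * n²`. -/
theorem stmt_2 (L : Finset ℝ) (P : Finset (ℝ × ℝ)) (n : ℕ)
    (hL : ∀ m ∈ L, 0 < m)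
    (hP : ∀ p ∈ P, 0 < p.1 ∧ 0 < p.2)
    (hrich : ∀ m ∈ L, n ≤ (P.filter (fun p => p.2 = m * p.1)).card) :
    (L.card - 1) * n ^ 2 ≤ (P + P).card := by
  obtain h0 | ⟨d, hd⟩ : L.card = 0 ∨ ∃ d, L.card = d + 1 := by
    rcases Nat.eq_zero_or_pos L.card with h | h
    · exact Or.inl h
    · exact Or.inr ⟨L.card - 1, (Nat.succ_pred_eq_of_pos h).symm⟩
  · simp [h0]
  rw [hd]
  simp only [Nat.add_sub_cancel]
  set f : Fin (d + 1) → ℝ := fun i => (L.orderIsoOfFin hd i : ℝ) with hf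
  have hfmem : ∀ i, f i ∈ L := fun i => (L.orderIsoOfFin hd i).2
  have hfmono : StrictMono f := fun i j hij => by
    exact_mod_cast (L.orderIsoOfFin hd).strictMono hij
  set A : Fin (d + 1) → Finset (ℝ × ℝ) :=
    fun i => P.filter (fun p => p.2 = f i * p.1) with hA
  have hAmem : ∀ i p, p ∈ A i → p ∈ P ∧ p.2 = f i * p.1 := by
    intro i p hp; simpa [hA] using hp
  set S : Fin d → Finset (ℝ × ℝ) := fun i => A i.castSucc + A i.succ with hS
  -- slope bounds for sums of points on two distinct lines
  have hslope : ∀ (i j : Fin (d + 1)), i < j → ∀ s ∈ A i + A j,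
      0 < s.1 ∧ f i * s.1 < s.2 ∧ s.2 < f j * s.1 := by
    intro i j hij s hs
    rw [Finset.mem_add] at hs
    obtain ⟨a, ha, b, hb, hab⟩ := hs
    obtain ⟨haP, ha2⟩ := hAmem i a ha
    obtain ⟨hbP, hb2⟩ := hAmem j b hb
    have ha1 : 0 < a.1 := (hP a haP).1
    have hb1 : 0 < b.1 := (hP b hbP).1
    have hlt : f i < f j := hfmono hij
    have hs1 : s.1 = a.1 + b.1 := by rw [← hab]; rfl
    have hs2 : s.2 = a.2 + b.2 := by rw [← hab]; rfl
    refine ⟨by rw [hs1]; linarith, ?_, ?_⟩ <;>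
      rw [hs1, hs2, ha2, hb2] <;> nlinarith
  -- each S i has at least n² elements
  have hcardS : ∀ i : Fin d, n ^ 2 ≤ (S i).card := by
    intro i
    have hne : f i.castSucc ≠ f i.succ :=
      ne_of_lt (hfmono (Fin.castSucc_lt_succ (i := i)))
    have hinj : Set.InjOn (fun p : (ℝ × ℝ) × (ℝ × ℝ) => p.1 + p.2)
        ((A i.castSucc ×ˢ A i.succ : Finset _) : Set _) := by
      rintro ⟨a, b⟩ hab ⟨a', b'⟩ hab' h
      have hab1 : a ∈ A i.castSucc ∧ b ∈ A i.succ := by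
        simpa [Finset.mem_product] using hab
      have hab'1 : a' ∈ A i.castSucc ∧ b' ∈ A i.succ := by
        simpa [Finset.mem_product] using hab'
      obtain ⟨_, ha2⟩ := hAmem i.castSucc a hab1.1
      obtain ⟨_, hb2⟩ := hAmem i.succ b hab1.2
      obtain ⟨_, ha'2⟩ := hAmem i.castSucc a' hab'1.1
      obtain ⟨_, hb'2⟩ := hAmem i.succ b' hab'1.2
      have e1 : a.1 + b.1 = a'.1 + b'.1 := congrArg Prod.fst h
      have e2' : a.2 + b.2 = a'.2 + b'.2 := congrArg Prod.snd h
      set m := f i.castSucc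
      set m' := f i.succ
      have e2 : m * a.1 + m' * b.1 = m * a'.1 + m' * b'.1 := by
        rw [← ha2, ← hb2, ← ha'2, ← hb'2]; exact e2'
      have e3 : (m - m') * (a.1 - a'.1) = 0 := by linear_combination e2 - m' * e1
      have key : a.1 = a'.1 := by
        rcases mul_eq_zero.mp e3 with h' | h'
        · exact absurd (sub_eq_zero.mp h') hne
        · exact sub_eq_zero.mp h'
      have keyb : b.1 = b'.1 := by linarith
      have : a = a' := Prod.ext key (by rw [ha2, ha'2, key])
      have : b = b' := Prod.ext keyb (by rw [hb2, hb'2, keyb])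
      exact Prod.ext ‹a = a'› ‹b = b'›
    have hmaps : ∀ p ∈ A i.castSucc ×ˢ A i.succ,
        p.1 + p.2 ∈ S i := by
      intro p hp
      rw [Finset.mem_product] at hp
      exact Finset.add_mem_add hp.1 hp.2
    have hle : (A i.castSucc ×ˢ A i.succ).card ≤ (S i).card :=
      Finset.card_le_card_of_injOn _ hmaps hinj
    have hn1 : n ≤ (A i.castSucc).card := hrich _ (hfmem _)
    have hn2 : n ≤ (A i.succ).card := hrich _ (hfmem _)
    calc n ^ 2 = n * n := sq n
      _ ≤ (A i.castSucc).card * (A i.succ).card := Nat.mul_le_mul hn1 hn2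
      _ = (A i.castSucc ×ˢ A i.succ).card := (Finset.card_product _ _).symm
      _ ≤ (S i).card := hle
  -- the S i are pairwise disjoint
  have hdisj' : ∀ i j : Fin d, i < j → Disjoint (S i) (S j) := by
    intro i j hij
    rw [Finset.disjoint_left]
    intro s hsi hsj
    obtain ⟨h1, _, h3⟩ := hslope i.castSucc i.succ (Fin.castSucc_lt_succ (i := i)) s hsi
    obtain ⟨_, h5, _⟩ := hslope j.castSucc j.succ (Fin.castSucc_lt_succ (i := j)) s hsj
    have hle : i.succ ≤ j.castSucc := by
      simp only [Fin.le_def, Fin.val_succ, Fin.coe_castSucc]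
      exact hij
    have : f i.succ ≤ f j.castSucc := hfmono.monotone hle
    nlinarith
  have hdisj : ∀ i ∈ (Finset.univ : Finset (Fin d)), ∀ j ∈ Finset.univ,
      i ≠ j → Disjoint (S i) (S j) := by
    intro i _ j _ hne
    rcases lt_or_gt_of_ne hne with h | h
    · exact hdisj' i j h
    · exact (hdisj' j i h).symm
  have hSsub : ∀ i : Fin d, S i ⊆ P + P := fun i =>
    Finset.add_subset_add (Finset.filter_subset _ _) (Finset.filter_subset _ _)
  calc d * n ^ 2 = ∑ _i : Fin d, n ^ 2 := by
        simp [Finset.sum_const, mul_comm]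
    _ ≤ ∑ i : Fin d, (S i).card := Finset.sum_le_sum fun i _ => hcardS i
    _ = (Finset.univ.biUnion S).card := (Finset.card_biUnion hdisj).symm
    _ ≤ (P + P).card := Finset.card_le_card (by
        intro s hs
        rw [Finset.mem_biUnion] at hs
        obtain ⟨i, _, hi⟩ := hs
        exact hSsub i hi)
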